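/- Under the bound m₁(t) ≤ 2ŝ·n·e^{ŝt}/(n·d·(e^{ŝt}-1) + 2ŝ) with ŝ = s + d/2, the time integral satisfies ∫₀^t m₁(u) du ≤ (2/d)·log(2ŝ/d + n·(e^{ŝt} - 1)) for all t ≥ 0. -/

import Mathlib

open Real MeasureTheory

/-- Integrated occupation-time bound: if `m₁` is nonnegative, measurable and satisfies the
Riccati comparison bound `m₁(u) ≤ 2ŝ n e^{ŝu}/(n d (e^{ŝu}-1) + 2ŝ)` with `ŝ = s + d/2`,
then `∫₀^t m₁(u) du ≤ (2/d) log(2ŝ/d + n(e^{ŝt} - 1))` for all `t ≥ 0`. -/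
theorem occupation_time_log_bound (s d n : ℝ) (hs : 0 < s) (hd : 0 < d) (hn : 1 ≤ n)
    (m₁ : ℝ → ℝ) (hmeas : Measurable m₁) (hnonneg : ∀ u : ℝ, 0 ≤ m₁ u)
    (hbound : ∀ u : ℝ, 0 ≤ u →
      m₁ u ≤ 2 * (s + d / 2) * n * Real.exp ((s + d / 2) * u) /
        (n * d * (Real.exp ((s + d / 2) * u) - 1) + 2 * (s + d / 2))) :
    ∀ t : ℝ, 0 ≤ t →
      (∫ u in Set.Ioc (0 : ℝ) t, m₁ u) ≤
        2 / d * Real.log (2 * (s + d / 2) / d + n * (Real.exp ((s + d / 2) * t) - 1)) := by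
  intro t ht
  set c : ℝ := s + d / 2 with hcdef
  have hc : 0 < c := by positivity
  have hn0 : 0 < n := lt_of_lt_of_le one_pos hn
  -- denominator
  set D : ℝ → ℝ := fun u => n * d * (Real.exp (c * u) - 1) + 2 * c with hDdef
  have hDpos : ∀ u : ℝ, 0 ≤ u → 0 < D u := by
    intro u hu
    have h1 : (1 : ℝ) ≤ Real.exp (c * u) := Real.one_le_exp (by positivity)
    have : 0 ≤ n * d * (Real.exp (c * u) - 1) :=
      mul_nonneg (mul_nonneg hn0.le hd.le) (by linarith)
    simp only [hDdef]; nlinarith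
  set g : ℝ → ℝ := fun u => 2 * c * n * Real.exp (c * u) / D u with hgdef
  -- g is continuous on Icc 0 t
  have hgcont : ContinuousOn g (Set.Icc 0 t) := by
    apply ContinuousOn.div
    · fun_prop
    · fun_prop
    · intro u hu; exact (hDpos u hu.1).ne'
  have hgint : IntegrableOn g (Set.Ioc 0 t) := by
    exact (hgcont.integrableOn_Icc).mono_set Set.Ioc_subset_Icc_self
  -- m₁ is integrable on Ioc 0 t
  have hgb : ∀ u : ℝ, 0 ≤ u → g u ≤ n * Real.exp (c * u) := by
    intro u hu
    have h2 : 2 * c ≤ D u := by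
      have h1 : (1 : ℝ) ≤ Real.exp (c * u) := by
        have hcu : (0:ℝ) ≤ c * u := by positivity
        simpa using Real.one_le_exp hcu
      have : 0 ≤ n * d * (Real.exp (c * u) - 1) :=
        mul_nonneg (mul_nonneg hn0.le hd.le) (by linarith)
      simp only [hDdef]; linarith
    have := div_le_div_of_nonneg_left (by positivity : (0:ℝ) ≤ 2 * c * n * Real.exp (c * u))
      (by positivity : (0:ℝ) < 2 * c) h2
    calc g u ≤ 2 * c * n * Real.exp (c * u) / (2 * c) := this
      _ = n * Real.exp (c * u) := by field_simp
  have hmint : IntegrableOn m₁ (Set.Ioc 0 t) := by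
    apply Measure.integrableOn_of_bounded (M := n * Real.exp (c * t))
    ·exact measure_Ioc_lt_top.ne
    · exact hmeas.aestronglyMeasurable
    · filter_upwards [ae_restrict_mem measurableSet_Ioc] with u hu
      rw [Real.norm_of_nonneg (hnonneg u)]
      calc m₁ u ≤ g u := hbound u hu.1.le
        _ ≤ n * Real.exp (c * u) := hgb u hu.1.le
        _ ≤ n * Real.exp (c * t) := by
            have := Real.exp_le_exp.2 (mul_le_mul_of_nonneg_left hu.2 hc.le)
            nlinarith [Real.exp_pos (c * u)]
  -- compare integrals
  have hle1 : (∫ u in Set.Ioc (0 : ℝ) t, m₁ u) ≤ ∫ u in Set.Ioc (0 : ℝ) t, g u := by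
    apply setIntegral_mono_on hmint hgint measurableSet_Ioc
    intro u hu; exact hbound u hu.1.le
  -- FTC
  set G : ℝ → ℝ := fun u => 2 / d * Real.log (D u) with hGdef
  have hderiv : ∀ u ∈ Set.uIcc (0:ℝ) t, HasDerivAt G (g u) u := by
    intro u hu
    rw [Set.uIcc_of_le ht] at hu
    have hden := hDpos u hu.1
    have h1 : HasDerivAt (fun u : ℝ => c * u) c u := by
      simpa using (hasDerivAt_id u).const_mul c
    have h2 : HasDerivAt (fun u : ℝ => Real.exp (c * u)) (Real.exp (c * u) * c) u :=
      (Real.hasDerivAt_exp (c * u)).comp u h1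
    have h3 : HasDerivAt D (n * d * (Real.exp (c * u) * c)) u :=
      ((h2.sub_const 1).const_mul (n * d)).add_const _
    have h4 : HasDerivAt G (2 / d * (n * d * (Real.exp (c * u) * c) / D u)) u :=
      (h3.log hden.ne').const_mul (2 / d)
    convert h4 using 1
    simp only [hgdef]
    field_simp
  have hftc : (∫ u in (0:ℝ)..t, g u) = G t - G 0 := by
    apply intervalIntegral.integral_eq_sub_of_hasDerivAt hderiv
    rw [intervalIntegrable_iff_integrableOn_Ioc_of_le ht]
    exact hgint
  have heq : (∫ u in Set.Ioc (0 : ℝ) t, g u) = G t - G 0 := by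
    rw [← intervalIntegral.integral_of_le ht]; exact hftc
  -- final estimate
  have hDt : 0 < D t := hDpos t ht
  have hG0 : G 0 = 2 / d * Real.log (2 * c) := by
    simp [hGdef, hDdef]
  have hfin : G t - G 0 ≤ 2 / d * Real.log (2 * c / d + n * (Real.exp (c * t) - 1)) := by
    rw [hG0, hGdef]
    have h2cd : d ≤ 2 * c := by simp only [hcdef]; linarith
    have : Real.log (D t) - Real.log (2 * c) ≤ Real.log (D t) - Real.log d := by
      have := Real.log_le_log hd h2cd
      linarith
    have hrw : Real.log (D t) - Real.log d = Real.log (2 * c / d + n * (Real.exp (c * t) - 1)) := by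
      rw [← Real.log_div hDt.ne' hd.ne']
      congr 1
      simp only [hDdef]
      field_simp
      ring
    calc 2 / d * Real.log (D t) - 2 / d * Real.log (2 * c)
        = 2 / d * (Real.log (D t) - Real.log (2 * c)) := by ring
      _ ≤ 2 / d * (Real.log (D t) - Real.log d) := by
          apply mul_le_mul_of_nonneg_left this (by positivity)
      _ = 2 / d * Real.log (2 * c / d + n * (Real.exp (c * t) - 1)) := by rw [hrw]
  calc (∫ u in Set.Ioc (0 : ℝ) t, m₁ u) ≤ ∫ u in Set.Ioc (0 : ℝ) t, g u := hle1
    _ = G t - G 0 := heq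
    _ ≤ _ := hfin
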